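/- arXiv:2502.03874 — 9 statements merged into one kernel-verified Lean document; each statement's English description precedes it below -/
import Mathlib

section
/- No paradox with deterministic probabilities (Theorem 16): Let N ≥ 2 and let A_1, …, A_N be nonempty finite types with designated values v_i ∈ A_i. Suppose given probability mass functions p_i on A_i × A_{i+1} for i = 1, …, N−1 and q on A_1 × A_N whose marginals are pairwise consistent: for each 1 ≤ i ≤ N−2 the second marginal of p_i equals the first marginal of p_{i+1}; the first marginal of q equals the first marginal of p_1; and the second marginal of q equals the second marginal of p_{N−1}. Then it is impossible that simultaneously q assigns probability 1 to the event {(a, b) : a = v_1 and b ≠ v_N} and, for every i = 1, …, N−1, p_i assigns probability 0 to the event {(a, b) : a = v_i and b ≠ v_{i+1}}. -/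
/-- The probability that a PMF assigns to an event. -/
noncomputable def prob {α : Type*} (p : PMF α) (E : Set α) : ENNReal :=
  p.toOuterMeasure E

lemma prob_mono {α : Type*} (p : PMF α) {E F : Set α} (h : E ⊆ F) :
    prob p E ≤ prob p F := p.toOuterMeasure.mono h

lemma prob_union_le {α : Type*} (p : PMF α) (E F : Set α) :
    prob p (E ∪ F) ≤ prob p E + prob p F := MeasureTheory.measure_union_le E F

lemma prob_le_one {α : Type*} (p : PMF α) (E : Set α) : prob p E ≤ 1 := by
  rw [prob, PMF.toOuterMeasure_apply]
  refine le_trans (ENNReal.tsum_le_tsum fun x => Set.indicator_le_self _ _ x) ?_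
  exact le_of_eq p.tsum_coe

lemma prob_add_compl {α : Type*} (p : PMF α) (E : Set α) :
    prob p E + prob p Eᶜ = 1 := by
  simp only [prob, PMF.toOuterMeasure_apply]
  rw [← ENNReal.tsum_add]
  rw [show (fun x => E.indicator (⇑p) x + Eᶜ.indicator (⇑p) x) = ⇑p from
    funext fun x => congrFun (Set.indicator_self_add_compl E (p : α → ENNReal)) x]
  exact p.tsum_coe

/-- **No paradox with deterministic probabilities** (Theorem 16).
Here `N = M + 2`, the measurements are indexed `0, …, M` (so there are `N - 1` of them),
`p i` is the joint distribution on `A i × A (i+1)`, and `q` is the joint distribution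
on `A 0 × A (M+1)` (the end points of the chain). -/
theorem no_paradox_with_deterministic_probabilities
    (M : ℕ) (A : ℕ → Type) [∀ i, Fintype (A i)] [∀ i, Nonempty (A i)]
    (v : ∀ i, A i)
    (p : ∀ i, PMF (A i × A (i + 1)))
    (q : PMF (A 0 × A (M + 1)))
    (hpp : ∀ i, i < M → ∀ b : A (i + 1),
      prob (p i) {x | x.2 = b} = prob (p (i + 1)) {x | x.1 = b})
    (hq1 : ∀ a : A 0, prob q {x | x.1 = a} = prob (p 0) {x | x.1 = a})
    (hq2 : ∀ b : A (M + 1), prob q {x | x.2 = b} = prob (p M) {x | x.2 = b})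
    (hzero : ∀ i, i ≤ M → prob (p i) {x | x.1 = v i ∧ x.2 ≠ v (i + 1)} = 0) :
    prob q {x | x.1 = v 0 ∧ x.2 ≠ v (M + 1)} ≠ 1 := by
  intro h1
  -- step within one link
  have step : ∀ i, i ≤ M →
      prob (p i) {x | x.1 = v i} ≤ prob (p i) {x | x.2 = v (i + 1)} := by
    intro i hi
    have hsub : {x : A i × A (i+1) | x.1 = v i} ⊆
        {x | x.1 = v i ∧ x.2 = v (i + 1)} ∪ {x | x.1 = v i ∧ x.2 ≠ v (i + 1)} := by
      intro x hx
      by_cases hx2 : x.2 = v (i + 1)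
      · exact Or.inl ⟨hx, hx2⟩
      · exact Or.inr ⟨hx, hx2⟩
    calc prob (p i) {x | x.1 = v i}
        ≤ prob (p i) ({x | x.1 = v i ∧ x.2 = v (i + 1)} ∪ {x | x.1 = v i ∧ x.2 ≠ v (i + 1)}) :=
          prob_mono _ hsub
      _ ≤ prob (p i) {x | x.1 = v i ∧ x.2 = v (i + 1)} +
            prob (p i) {x | x.1 = v i ∧ x.2 ≠ v (i + 1)} := prob_union_le _ _ _
      _ = prob (p i) {x | x.1 = v i ∧ x.2 = v (i + 1)} := by rw [hzero i hi, add_zero]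
      _ ≤ prob (p i) {x | x.2 = v (i + 1)} := prob_mono _ (fun x hx => hx.2)
  -- chain
  have chain : ∀ i, i ≤ M →
      prob (p 0) {x | x.1 = v 0} ≤ prob (p i) {x | x.2 = v (i + 1)} := by
    intro i
    induction i with
    | zero => intro h; exact step 0 h
    | succ n ih =>
      intro h
      have h1' : n < M := Nat.lt_of_succ_le h
      calc prob (p 0) {x | x.1 = v 0} ≤ prob (p n) {x | x.2 = v (n + 1)} :=
            ih (le_of_lt h1')
        _ = prob (p (n + 1)) {x | x.1 = v (n + 1)} := hpp n h1' _
        _ ≤ prob (p (n + 1)) {x | x.2 = v (n + 2)} := step (n + 1) h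
  -- q {x.1 = v 0} = 1
  have hq0 : prob q {x | x.1 = v 0} = 1 :=
    le_antisymm (prob_le_one _ _)
      (h1 ▸ prob_mono q (fun x hx => hx.1))
  have hlast : prob q {x | x.2 = v (M + 1)} = 1 := by
    refine le_antisymm (prob_le_one _ _) ?_
    calc (1 : ENNReal) = prob (p 0) {x | x.1 = v 0} := by rw [← hq1, hq0]
      _ ≤ prob (p M) {x | x.2 = v (M + 1)} := chain M le_rfl
      _ = prob q {x | x.2 = v (M + 1)} := (hq2 _).symm
  -- contradiction: the two events are disjoint
  have hcompl : prob q {x | x.1 = v 0 ∧ x.2 ≠ v (M + 1)}ᶜ = 0 := by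
    have := prob_add_compl q {x | x.1 = v 0 ∧ x.2 ≠ v (M + 1)}
    rw [h1] at this
    have hx : (1 : ENNReal) + prob q {x | x.1 = v 0 ∧ x.2 ≠ v (M + 1)}ᶜ = 1 + 0 := by
      rw [add_zero]; exact this
    exact (ENNReal.add_right_inj ENNReal.one_ne_top).mp hx
  have hsub : {x : A 0 × A (M + 1) | x.2 = v (M + 1)} ⊆
      {x | x.1 = v 0 ∧ x.2 ≠ v (M + 1)}ᶜ := fun x hx h => h.2 hx
  have := prob_mono q hsub
  rw [hlast, hcompl] at this
  exact absurd this (by norm_num)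
end

section
/- Post-selection free n-cycle paradox and extremal vertices (Theorem 18, probabilistic core): Let n ≥ 2 and let e : Fin n → PMF (Bool × Bool), where e i is interpreted as the joint distribution of the adjacent pair (x_i, x_{i+1 mod n}) in an n-cycle scenario. For each i define the correlator E_i := e_i(false,false) + e_i(true,true) − e_i(false,true) − e_i(true,false). Then the following are equivalent: (a) there exists v : Fin n → Bool such that for every i = 0, …, n−2 the support of e_i is contained in {(v_i, v_{i+1}), (¬v_i, ¬v_{i+1})}, and the support of e_{n−1} is contained in {(v_{n−1}, ¬v_0), (¬v_{n−1}, v_0)}; (b) for every i, E_i = 1 or E_i = −1, and the product ∏_{i=0}^{n−1} E_i = −1. -/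
/-- The correlator `<X_i, X_{i+1}> = P(x_i = x_{i+1}) - P(x_i ≠ x_{i+1})` of a joint
distribution of two binary outcomes. -/
noncomputable def correlator (p : PMF (Bool × Bool)) : ℝ :=
  (p (false, false)).toReal + (p (true, true)).toReal
    - (p (false, true)).toReal - (p (true, false)).toReal

noncomputable def sgn (b : Bool) : ℝ := if b then -1 else 1

lemma sgn_xor (a b : Bool) : sgn (xor a b) = sgn a * sgn b := by
  cases a <;> cases b <;> norm_num [sgn]

lemma sgn_not (a : Bool) : sgn (!a) = -sgn a := by
  cases a <;> norm_num [sgn]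

lemma sgn_pm (a : Bool) : sgn a = 1 ∨ sgn a = -1 := by
  cases a <;> simp [sgn]

lemma sgn_sq (a : Bool) : sgn a * sgn a = 1 := by
  cases a <;> norm_num [sgn]

lemma pmf_sum (p : PMF (Bool × Bool)) :
    (p (false, false)).toReal + (p (false, true)).toReal
      + (p (true, false)).toReal + (p (true, true)).toReal = 1 := by
  have h := p.tsum_coe
  rw [tsum_fintype] at h
  simp only [Fintype.sum_prod_type, Fintype.sum_bool] at h
  have h2 : p (false, false) + p (false, true) + p (true, false) + p (true, true) = 1 := by
    rw [← h]; ring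
  have n1 := PMF.apply_ne_top p (false, false)
  have n2 := PMF.apply_ne_top p (false, true)
  have n3 := PMF.apply_ne_top p (true, false)
  have n4 := PMF.apply_ne_top p (true, true)
  rw [← ENNReal.toReal_add n1 n2, ← ENNReal.toReal_add (ENNReal.add_ne_top.2 ⟨n1, n2⟩) n3,
    ← ENNReal.toReal_add (ENNReal.add_ne_top.2 ⟨ENNReal.add_ne_top.2 ⟨n1, n2⟩, n3⟩) n4, h2]
  simp

lemma toReal_zero_iff (p : PMF (Bool × Bool)) (x : Bool × Bool) :
    (p x).toReal = 0 ↔ p x = 0 := by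
  rw [ENNReal.toReal_eq_zero_iff]
  simp [PMF.apply_ne_top p x]

lemma corr_key (p : PMF (Bool × Bool)) (c : Bool) :
    correlator p = sgn c ↔ ∀ x : Bool × Bool, xor x.1 x.2 ≠ c → p x = 0 := by
  have hs := pmf_sum p
  have h1 := ENNReal.toReal_nonneg (a := p (false, false))
  have h2 := ENNReal.toReal_nonneg (a := p (false, true))
  have h3 := ENNReal.toReal_nonneg (a := p (true, false))
  have h4 := ENNReal.toReal_nonneg (a := p (true, true))
  cases c with
  | false =>
    have hsg : sgn false = 1 := by norm_num [sgn]
    rw [hsg]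
    simp only [correlator]
    constructor
    · intro h x hx
      have e2 : (p (false, true)).toReal = 0 := by linarith
      have e3 : (p (true, false)).toReal = 0 := by linarith
      rcases x with ⟨a, b⟩
      cases a <;> cases b <;> simp_all [toReal_zero_iff]
    · intro h
      have e2 : (p (false, true)).toReal = 0 := by
        rw [h (false, true) (by simp)]; simp
      have e3 : (p (true, false)).toReal = 0 := by
        rw [h (true, false) (by simp)]; simp
      linarith
  | true =>
    have hsg : sgn true = -1 := by norm_num [sgn]
    rw [hsg]
    simp only [correlator]
    constructor
    · intro h x hx
      have e1 : (p (false, false)).toReal = 0 := by linarith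
      have e4 : (p (true, true)).toReal = 0 := by linarith
      rcases x with ⟨a, b⟩
      cases a <;> cases b <;> simp_all [toReal_zero_iff]
    · intro h
      have e1 : (p (false, false)).toReal = 0 := by
        rw [h (false, false) (by simp)]; simp
      have e4 : (p (true, true)).toReal = 0 := by
        rw [h (true, true) (by simp)]; simp
      linarith

lemma support_pairs (p : PMF (Bool × Bool)) (u w : Bool) :
    p.support ⊆ {(u, w), (!u, !w)} ↔ correlator p = sgn (xor u w) := by
  rw [corr_key]
  constructor
  · intro h x hx
    by_contra hne
    have hx' := h ((PMF.mem_support_iff _ _).2 hne)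
    rcases x with ⟨a, b⟩
    simp only [Set.mem_insert_iff, Set.mem_singleton_iff, Prod.mk.injEq] at hx'
    rcases hx' with ⟨rfl, rfl⟩ | ⟨rfl, rfl⟩ <;> simp at hx
  · intro h x hx
    rcases x with ⟨a, b⟩
    have hp := (PMF.mem_support_iff _ _).1 hx
    by_contra hmem
    exact hp (h (a, b) (by
      intro hxor
      apply hmem
      cases u <;> cases w <;> cases a <;> cases b <;> simp_all))


/-- **Post-selection free `n`-cycle paradox and extremal vertices** (Theorem 18,
probabilistic core).  `e i` is the joint distribution of the adjacent pair
`(x_i, x_{i+1 mod n})`.  Condition (a): there is a Boolean assignment `v` such that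
each non-closing edge is supported on `{(v_i, v_{i+1}), (¬v_i, ¬v_{i+1})}` and the
closing edge is supported on `{(v_{n-1}, ¬v_0), (¬v_{n-1}, v_0)}`.  Condition (b):
every correlator is `±1` and their product is `-1`. -/
theorem postselection_free_ncycle_paradox_iff_extremal_vertex
    (n : ℕ) (hn : 2 ≤ n) (e : Fin n → PMF (Bool × Bool)) :
    (∃ v : Fin n → Bool,
        (∀ i : Fin n, ∀ h : (i : ℕ) + 1 < n,
          (e i).support ⊆ {(v i, v ⟨(i : ℕ) + 1, h⟩), (!(v i), !(v ⟨(i : ℕ) + 1, h⟩))}) ∧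
        (∀ i : Fin n, (i : ℕ) + 1 = n →
          (e i).support ⊆ {(v i, !(v ⟨0, by omega⟩)), (!(v i), v ⟨0, by omega⟩)})) ↔
      ((∀ i, correlator (e i) = 1 ∨ correlator (e i) = -1) ∧
        (∏ i, correlator (e i)) = -1) := by
  have hnz : NeZero n := ⟨by omega⟩
  constructor
  · rintro ⟨v, hopen, hclose⟩
    -- translate support conditions into correlator equations
    have hopen' : ∀ i : Fin n, ∀ h : (i : ℕ) + 1 < n,
        correlator (e i) = sgn (xor (v i) (v ⟨(i : ℕ) + 1, h⟩)) := by
      intro i h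
      exact (support_pairs (e i) (v i) (v ⟨(i : ℕ) + 1, h⟩)).1 (hopen i h)
    have hclose' : ∀ i : Fin n, (i : ℕ) + 1 = n →
        correlator (e i) = sgn (!(xor (v i) (v ⟨0, by omega⟩))) := by
      intro i h
      have := (support_pairs (e i) (v i) (!(v ⟨0, by omega⟩))).1 (by
        have h2 : (!(!(v ⟨0, by omega⟩))) = v ⟨0, by omega⟩ := Bool.not_not _
        rw [h2]; exact hclose i h)
      rw [this]
      congr 1
      cases v i <;> cases v (⟨0, by omega⟩ : Fin n) <;> simp
    have hfac : ∀ i : Fin n, correlator (e i)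
        = (if (i : ℕ) + 1 = n then (-1 : ℝ) else 1) * (sgn (v i) * sgn (v (i + 1))) := by
      intro i
      rcases lt_or_eq_of_le (Nat.succ_le_of_lt i.isLt) with h | h
      · have hne : (i : ℕ) + 1 ≠ n := by omega
        rw [if_neg hne, one_mul]
        have hone : ((1 : Fin n) : ℕ) = 1 := by
          rw [Fin.val_one']; exact Nat.mod_eq_of_lt (by omega)
        have hv : (i + 1 : Fin n) = ⟨(i : ℕ) + 1, h⟩ := by
          apply Fin.ext
          rw [Fin.val_add, hone]
          exact Nat.mod_eq_of_lt h
        rw [hv, hopen' i h, sgn_xor]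
      · rw [if_pos h]
        have hone : ((1 : Fin n) : ℕ) = 1 := by
          rw [Fin.val_one']; exact Nat.mod_eq_of_lt (by omega)
        have hv : (i + 1 : Fin n) = ⟨0, by omega⟩ := by
          apply Fin.ext
          rw [Fin.val_add, hone]
          show ((i : ℕ) + 1) % n = 0
          have h' : (i : ℕ) + 1 = n := h
          rw [h']; exact Nat.mod_self n
        rw [hv, hclose' i h, sgn_not, sgn_xor]
        ring
    constructor
    · intro i
      rw [hfac i]
      rcases sgn_pm (v i) with h1 | h1 <;> rcases sgn_pm (v (i + 1)) with h2 | h2 <;>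
        split <;> rw [h1, h2] <;> norm_num
    · rw [Finset.prod_congr rfl (fun i _ => hfac i)]
      rw [Finset.prod_mul_distrib, Finset.prod_mul_distrib]
      have he : (∏ i : Fin n, (if (i : ℕ) + 1 = n then (-1 : ℝ) else 1)) = -1 := by
        rw [Finset.prod_eq_single (⟨n - 1, by omega⟩ : Fin n)]
        · rw [if_pos (show ((⟨n - 1, by omega⟩ : Fin n) : ℕ) + 1 = n by
            show n - 1 + 1 = n; omega)]
        · intro j _ hj
          rw [if_neg]
          intro hc
          exact hj (Fin.ext (by simp; omega))
        · intro h; exact absurd (Finset.mem_univ _) h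
      have hshift : (∏ i : Fin n, sgn (v (i + 1))) = ∏ i : Fin n, sgn (v i) :=
        Equiv.prod_comp (Equiv.addRight (1 : Fin n)) (fun i => sgn (v i))
      rw [he, hshift, ← Finset.prod_mul_distrib]
      rw [Finset.prod_congr rfl (fun i _ => sgn_sq (v i))]
      simp
  · rintro ⟨hpm, hprod⟩
    classical
    set c : Fin n → Bool := fun i => decide (correlator (e i) = -1) with hc
    have hcorr : ∀ i, correlator (e i) = sgn (c i) := by
      intro i
      rcases hpm i with h | h <;> norm_num [hc, h, sgn]
    set P : Fin n → ℝ := fun i =>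
      ∏ j ∈ Finset.univ.filter (fun j : Fin n => (j : ℕ) < (i : ℕ)), correlator (e j) with hP
    have hPpm : ∀ i, P i = 1 ∨ P i = -1 := by
      intro i
      apply Finset.prod_induction _ (fun x => x = 1 ∨ x = -1)
      · rintro a b (rfl | rfl) (rfl | rfl) <;> norm_num
      · left; rfl
      · intro j _; exact hpm j
    have hPsq : ∀ i, P i * P i = 1 := by
      intro i; rcases hPpm i with h | h <;> rw [h] <;> norm_num
    have hstep : ∀ i : Fin n, ∀ h : (i : ℕ) + 1 < n,
        P ⟨(i : ℕ) + 1, h⟩ = P i * correlator (e i) := by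
      intro i h
      have hset : Finset.univ.filter (fun j : Fin n => (j : ℕ) < (i : ℕ) + 1)
          = insert i (Finset.univ.filter (fun j : Fin n => (j : ℕ) < (i : ℕ))) := by
        ext j
        simp [Fin.ext_iff]
        omega
      simp only [hP, hset]
      rw [Finset.prod_insert (by simp)]
      ring
    have hlast : ∀ i : Fin n, (i : ℕ) + 1 = n →
        P i * correlator (e i) = -1 := by
      intro i h
      have hset : (Finset.univ : Finset (Fin n))
          = insert i (Finset.univ.filter (fun j : Fin n => (j : ℕ) < (i : ℕ))) := by
        ext j
        simp [Fin.ext_iff]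
        have := j.isLt
        omega
      rw [← hprod, hset, Finset.prod_insert (by simp)]
      ring
    refine ⟨fun i => decide (P i = -1), ?_, ?_⟩
    · intro i h
      rw [support_pairs]
      have hv : ∀ k : Fin n, sgn (decide (P k = -1)) = P k := by
        intro k
        rcases hPpm k with hk | hk <;> rw [hk] <;> norm_num [sgn]
      rw [sgn_xor, hv, hv, hstep i h, ← mul_assoc, hPsq i, one_mul]
    · intro i h
      have heq : (!(!(decide (P (⟨0, by omega⟩ : Fin n) = -1)))) = decide (P (⟨0, by omega⟩ : Fin n) = -1) := Bool.not_not _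
      have hsub : ({((decide (P i = -1) : Bool), !(decide (P (⟨0, by omega⟩ : Fin n) = -1))), (!(decide (P i = -1) : Bool), decide (P (⟨0, by omega⟩ : Fin n) = -1))} : Set (Bool × Bool))
          = {((decide (P i = -1) : Bool), !(decide (P (⟨0, by omega⟩ : Fin n) = -1))), (!(decide (P i = -1) : Bool), !(!(decide (P (⟨0, by omega⟩ : Fin n) = -1))))} := by
        rw [heq]
      rw [hsub, support_pairs]
      have hv : ∀ k : Fin n, sgn (decide (P k = -1)) = P k := by
        intro k
        rcases hPpm k with hk | hk <;> rw [hk] <;> norm_num [sgn]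
      have hP0 : P (⟨0, by omega⟩ : Fin n) = 1 := by
        simp only [hP]
        rw [Finset.prod_eq_one]
        intro j hj
        simp at hj
      rw [sgn_xor, hv, sgn_not, hv, hP0]
      have h1 := hlast i h
      have h2 := hPsq i
      calc correlator (e i) = P i * (P i * correlator (e i)) := by
            rw [← mul_assoc, h2, one_mul]
        _ = P i * -1 := by rw [h1]
end

section
/- Chain reduction (Theorem 19): Let n be a nonempty finite type, let ρ, A, B, C ∈ Matrix n n ℂ, where ρ is positive semidefinite and A, B, C are orthogonal projections (Hermitian idempotents) that pairwise commute: A*B = B*A, B*C = C*B, A*C = C*A. If Tr(B * C * ρ) = Tr(C * ρ) and Tr(A * B * ρ) = Tr(B * ρ), then Tr(A * C * ρ) = Tr(C * ρ). -/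
open Matrix
open scoped ComplexOrder
open scoped MatrixOrder

private lemma tr_zero {n : Type*} [Fintype n] [DecidableEq n]
    (M : Matrix n n ℂ) (h : (Mᴴ * M).trace = 0) : M = 0 := by
  have h' : ∑ j, ∑ i, Complex.normSq (M i j) = 0 := by
    have := congrArg Complex.re h
    simpa [Matrix.trace, Matrix.diag, Matrix.mul_apply, Complex.normSq_apply,
      Complex.mul_re, mul_comm] using this
  ext i j
  have hj := (Finset.sum_eq_zero_iff_of_nonneg (fun j _ =>
    Finset.sum_nonneg (fun i _ => Complex.normSq_nonneg _))).mp h' j (Finset.mem_univ j)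
  have hi := (Finset.sum_eq_zero_iff_of_nonneg (fun i _ =>
    Complex.normSq_nonneg _)).mp hj i (Finset.mem_univ i)
  simpa using Complex.normSq_eq_zero.mp hi

private lemma proj_sqrt_zero {n : Type*} [Fintype n] [DecidableEq n]
    {ρ P : Matrix n n ℂ} (hρ : ρ.PosSemidef) (hPh : Pᴴ = P) (hP2 : P * P = P)
    (h : (P * ρ).trace = 0) : P * CFC.sqrt ρ = 0 := by
  have hs : CFC.sqrt ρ * CFC.sqrt ρ = ρ := CFC.sqrt_mul_sqrt_self ρ hρ.nonneg
  have hsh : (CFC.sqrt ρ)ᴴ = CFC.sqrt ρ := (CFC.sqrt_nonneg ρ).posSemidef.isHermitian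
  apply tr_zero
  have e : (P * CFC.sqrt ρ)ᴴ * (P * CFC.sqrt ρ) = CFC.sqrt ρ * P * CFC.sqrt ρ := by
    rw [conjTranspose_mul, hsh, hPh]
    rw [Matrix.mul_assoc, ← Matrix.mul_assoc P, hP2, ← Matrix.mul_assoc]
  rw [e, Matrix.trace_mul_cycle, hs, Matrix.trace_mul_comm, h]

/-- **Chain reduction** (Theorem 19). For pairwise commuting orthogonal projections
`A`, `B`, `C` and a positive semidefinite state `ρ`, the inferences
`Tr(BCρ) = Tr(Cρ)` (outcome `C` implies outcome `B`) and `Tr(ABρ) = Tr(Bρ)`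
(outcome `B` implies outcome `A`) imply `Tr(ACρ) = Tr(Cρ)`. -/
theorem chain_reduction {n : Type*} [Fintype n] [DecidableEq n] [Nonempty n]
    (ρ A B C : Matrix n n ℂ) (hρ : ρ.PosSemidef)
    (hAh : Aᴴ = A) (hA2 : A * A = A)
    (hBh : Bᴴ = B) (hB2 : B * B = B)
    (hCh : Cᴴ = C) (hC2 : C * C = C)
    (hAB : A * B = B * A) (hBC : B * C = C * B) (hAC : A * C = C * A)
    (h1 : (B * C * ρ).trace = (C * ρ).trace)
    (h2 : (A * B * ρ).trace = (B * ρ).trace) :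
    (A * C * ρ).trace = (C * ρ).trace := by
  set s := CFC.sqrt ρ with hs_def
  have hs : s * s = ρ := CFC.sqrt_mul_sqrt_self ρ hρ.nonneg
  -- projection (1-B)C
  have hP1h : ((1 - B) * C)ᴴ = (1 - B) * C := by
    rw [conjTranspose_mul, hCh, conjTranspose_sub, conjTranspose_one, hBh,
      sub_mul, mul_sub, Matrix.mul_one, Matrix.one_mul, hBC]
  have hP1sq : ((1 - B) * C) * ((1 - B) * C) = (1 - B) * C := by
    have hmid : C * ((1 - B) * C) = (1 - B) * C := by
      rw [sub_mul, mul_sub, Matrix.one_mul, hC2,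
        ← Matrix.mul_assoc, ← hBC, Matrix.mul_assoc, hC2]
    have hBB : (1 - B) * (1 - B) = 1 - B := by
      rw [mul_sub, Matrix.mul_one, sub_mul, Matrix.one_mul, hB2]
      simp
    rw [Matrix.mul_assoc, hmid, ← Matrix.mul_assoc, hBB]
  have htr1 : (((1 - B) * C) * ρ).trace = 0 := by
    rw [sub_mul, Matrix.one_mul, sub_mul, trace_sub, h1, sub_self]
  have hz1 : (1 - B) * C * s = 0 := proj_sqrt_zero hρ hP1h hP1sq htr1
  have e1 : C * s = B * (C * s) := by
    have := hz1
    rw [sub_mul, Matrix.one_mul, sub_mul, sub_eq_zero] at this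
    exact this.trans (Matrix.mul_assoc B C s)
  -- projection (1-A)B
  have hP2h : ((1 - A) * B)ᴴ = (1 - A) * B := by
    rw [conjTranspose_mul, hBh, conjTranspose_sub, conjTranspose_one, hAh,
      sub_mul, mul_sub, Matrix.mul_one, Matrix.one_mul, hAB]
  have hP2sq : ((1 - A) * B) * ((1 - A) * B) = (1 - A) * B := by
    have hmid : B * ((1 - A) * B) = (1 - A) * B := by
      rw [sub_mul, mul_sub, Matrix.one_mul, hB2,
        ← Matrix.mul_assoc, ← hAB, Matrix.mul_assoc, hB2]
    have hAA : (1 - A) * (1 - A) = 1 - A := by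
      rw [mul_sub, Matrix.mul_one, sub_mul, Matrix.one_mul, hA2]
      simp
    rw [Matrix.mul_assoc, hmid, ← Matrix.mul_assoc, hAA]
  have htr2 : (((1 - A) * B) * ρ).trace = 0 := by
    rw [sub_mul, Matrix.one_mul, sub_mul, trace_sub, h2, sub_self]
  have hz2 : (1 - A) * B * s = 0 := proj_sqrt_zero hρ hP2h hP2sq htr2
  have e2 : B * s = A * (B * s) := by
    have := hz2
    rw [sub_mul, Matrix.one_mul, sub_mul, sub_eq_zero] at this
    exact this.trans (Matrix.mul_assoc A B s)
  -- chain: C*s = A*C*s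
  have key : C * s = A * (C * s) := by
    calc C * s = B * (C * s) := e1
      _ = C * (B * s) := by simp only [← Matrix.mul_assoc]; rw [hBC]
      _ = C * (A * (B * s)) := by rw [← e2]
      _ = A * (C * (B * s)) := by simp only [← Matrix.mul_assoc]; rw [← hAC]
      _ = A * (B * (C * s)) := by
          simp only [← Matrix.mul_assoc]
          rw [Matrix.mul_assoc A, ← hBC, ← Matrix.mul_assoc]
      _ = A * (C * s) := by rw [← e1]
  have final : A * C * ρ = C * ρ := by
    rw [← hs]
    simp only [Matrix.mul_assoc]
    rw [← Matrix.mul_assoc C s s]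
    conv_rhs => rw [key]
    exact (Matrix.mul_assoc A (C * s) s).symm
  rw [final]
end

section
/- Symmetric chain reduction (Theorem 21): Let n be a nonempty finite type, N ≥ 2, and let π_1, …, π_N ∈ Matrix n n ℂ be orthogonal projections such that each cyclically adjacent pair commutes: π_i * π_{i+1} = π_{i+1} * π_i for i = 1, …, N−1 and π_N * π_1 = π_1 * π_N (no commutation is assumed for non-adjacent pairs). Let ρ ∈ Matrix n n ℂ be positive semidefinite. If for every i = 1, …, N−1 one has Tr(π_i * π_{i+1} * ρ) = Tr(π_i * ρ) = Tr(π_{i+1} * ρ), then Tr(π_1 * π_N * ρ) = Tr(π_1 * ρ) = Tr(π_N * ρ). -/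
open Matrix
open scoped ComplexOrder

private lemma trace_conjTranspose_mul_self_eq_zero' {m n : Type*} [Fintype m] [Fintype n]
    [DecidableEq n] (A : Matrix m n ℂ) (h : (Aᴴ * A).trace = 0) : A = 0 := by
  have hsum : ∑ j : n, ∑ i : m, (Complex.normSq (A i j) : ℂ) = 0 := by
    rw [← h]
    simp only [Matrix.trace, Matrix.diag, Matrix.mul_apply, Matrix.conjTranspose_apply]
    congr 1; ext j; congr 1; ext i
    rw [Complex.normSq_eq_conj_mul_self]
    rfl
  have hsum' : ∑ j : n, ∑ i : m, Complex.normSq (A i j) = 0 := by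
    exact_mod_cast hsum
  have hterm : ∀ j : n, ∀ i : m, Complex.normSq (A i j) = 0 := by
    intro j i
    have h1 := Finset.sum_eq_zero_iff_of_nonneg (fun j _ =>
      Finset.sum_nonneg fun i _ => Complex.normSq_nonneg (A i j)) |>.mp hsum' j (Finset.mem_univ j)
    exact (Finset.sum_eq_zero_iff_of_nonneg fun i _ => Complex.normSq_nonneg (A i j)).mp h1 i
      (Finset.mem_univ i)
  ext i j
  exact Complex.normSq_eq_zero.mp (hterm j i)

/-- If `R` is an orthogonal projection, `ρ` is PSD, and `Tr(Rρ) = 0`, then `Rρ = 0`. -/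
private lemma proj_trace_zero {n : Type*} [Fintype n] [DecidableEq n]
    (R ρ : Matrix n n ℂ) (hρ : ρ.PosSemidef) (hR : Rᴴ = R) (hR2 : R * R = R)
    (h : (R * ρ).trace = 0) : R * ρ = 0 := by
  obtain ⟨B, hB⟩ : ∃ B : Matrix n n ℂ, ρ = Bᴴ * B := by
    open scoped MatrixOrder in exact CStarAlgebra.nonneg_iff_eq_star_mul_self.mp hρ.nonneg
  have key : B * R = 0 := by
    apply trace_conjTranspose_mul_self_eq_zero'
    have : (B * R)ᴴ * (B * R) = R * ρ * R := by
      rw [conjTranspose_mul, hR, hB]; noncomm_ring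
    rw [this, Matrix.trace_mul_cycle, hR2, h]
  have hρR : ρ * R = 0 := by rw [hB, Matrix.mul_assoc, key, Matrix.mul_zero]
  calc R * ρ = (ρᴴ * Rᴴ)ᴴ := by simp
    _ = (ρ * R)ᴴ := by rw [hR, hρ.isHermitian.eq]
    _ = 0 := by rw [hρR]; simp

/-- Key step: adjacent equalities force `π i * ρ = π (i+1) * ρ`. -/
private lemma step_eq {n : Type*} [Fintype n] [DecidableEq n]
    (P Q ρ : Matrix n n ℂ) (hρ : ρ.PosSemidef)
    (hP : Pᴴ = P) (hP2 : P * P = P) (hQ : Qᴴ = Q) (hQ2 : Q * Q = Q)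
    (hPQ : P * Q = Q * P)
    (h1 : (P * Q * ρ).trace = (P * ρ).trace)
    (h2 : (P * ρ).trace = (Q * ρ).trace) : P * ρ = Q * ρ := by
  have hc : (1 - Q) * P = P * (1 - Q) := by
    rw [sub_mul, mul_sub, one_mul, mul_one, hPQ]
  have hc' : (1 - P) * Q = Q * (1 - P) := by
    rw [sub_mul, mul_sub, one_mul, mul_one, hPQ]
  have hQ1 : (1 - Q) * (1 - Q) = 1 - Q := by
    rw [mul_sub, mul_one, sub_mul, one_mul, hQ2, sub_self, sub_zero]
  have hP1 : (1 - P) * (1 - P) = 1 - P := by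
    rw [mul_sub, mul_one, sub_mul, one_mul, hP2, sub_self, sub_zero]
  have hA : P * (1 - Q) * ρ = 0 := by
    apply proj_trace_zero _ _ hρ
    · rw [conjTranspose_mul, hP, conjTranspose_sub, conjTranspose_one, hQ, hc]
    · rw [Matrix.mul_assoc, ← Matrix.mul_assoc (1 - Q) P (1 - Q), hc,
        Matrix.mul_assoc P (1 - Q) (1 - Q), hQ1, ← Matrix.mul_assoc, hP2]
    · rw [mul_sub, mul_one, Matrix.sub_mul, Matrix.trace_sub, h1, sub_self]
  have hB : Q * (1 - P) * ρ = 0 := by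
    apply proj_trace_zero _ _ hρ
    · rw [conjTranspose_mul, hQ, conjTranspose_sub, conjTranspose_one, hP, hc']
    · rw [Matrix.mul_assoc, ← Matrix.mul_assoc (1 - P) Q (1 - P), hc',
        Matrix.mul_assoc Q (1 - P) (1 - P), hP1, ← Matrix.mul_assoc, hQ2]
    · rw [mul_sub, mul_one, Matrix.sub_mul, Matrix.trace_sub, ← hPQ, h1,
        h2, sub_self]
  have e1 : P * ρ = P * Q * ρ := by
    have := hA
    rw [mul_sub, mul_one, Matrix.sub_mul, sub_eq_zero] at this
    exact this
  have e2 : Q * ρ = Q * P * ρ := by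
    have := hB
    rw [mul_sub, mul_one, Matrix.sub_mul, sub_eq_zero] at this
    exact this
  rw [e1, e2, hPQ]

/-- **Symmetric chain reduction** (Theorem 21). The projections are indexed
`0, …, N-1`.  Each cyclically adjacent pair commutes, and each adjacent pair of
Born probabilities encodes a two-way inference
`Tr(π_i π_{i+1} ρ) = Tr(π_i ρ) = Tr(π_{i+1} ρ)`.  Then the same holds for the
end points: `Tr(π_0 π_{N-1} ρ) = Tr(π_0 ρ) = Tr(π_{N-1} ρ)`. -/
theorem symmetric_chain_reduction {n : Type*} [Fintype n] [DecidableEq n] [Nonempty n]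
    (N : ℕ) (hN : 2 ≤ N) (π : ℕ → Matrix n n ℂ) (ρ : Matrix n n ℂ)
    (hρ : ρ.PosSemidef)
    (hproj : ∀ i, i < N → (π i)ᴴ = π i ∧ π i * π i = π i)
    (hcomm : ∀ i, i + 1 < N → π i * π (i + 1) = π (i + 1) * π i)
    (hcomm' : π (N - 1) * π 0 = π 0 * π (N - 1))
    (htr : ∀ i, i + 1 < N →
      (π i * π (i + 1) * ρ).trace = (π i * ρ).trace ∧
      (π i * ρ).trace = (π (i + 1) * ρ).trace) :
    (π 0 * π (N - 1) * ρ).trace = (π 0 * ρ).trace ∧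
    (π 0 * ρ).trace = (π (N - 1) * ρ).trace := by
  have key : ∀ i, i < N → π i * ρ = π 0 * ρ := by
    intro i
    induction i with
    | zero => intro _; rfl
    | succ k ih =>
      intro hk
      have hk' : k + 1 < N := hk
      have hkN : k < N := Nat.lt_of_succ_lt hk
      have h := step_eq (π k) (π (k + 1)) ρ hρ
        (hproj k hkN).1 (hproj k hkN).2 (hproj (k+1) hk').1 (hproj (k+1) hk').2
        (hcomm k hk') (htr k hk').1 (htr k hk').2
      rw [← h, ih hkN]
  have hlast : π (N - 1) * ρ = π 0 * ρ := key (N - 1) (Nat.sub_lt (by omega) one_pos)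
  have h0 := hproj 0 (by omega)
  constructor
  · rw [Matrix.mul_assoc, hlast, ← Matrix.mul_assoc, h0.2]
  · rw [hlast]
end

section
/- No symmetric quantum paradoxes (Corollary 22): Let n be a nonempty finite type, N ≥ 2, and let π_1, …, π_N ∈ Matrix n n ℂ be orthogonal projections such that each cyclically adjacent pair commutes: π_i * π_{i+1} = π_{i+1} * π_i for i = 1, …, N−1 and π_N * π_1 = π_1 * π_N. Let ρ ∈ Matrix n n ℂ be positive semidefinite and assume for every i = 1, …, N−1 that Tr(π_i * π_{i+1} * ρ) = Tr(π_i * ρ) = Tr(π_{i+1} * ρ). Then Tr(π_1 * (1 − π_N) * ρ) = 0; in particular it is impossible to additionally have Tr(π_1 * (1 − π_N) * ρ) ≠ 0, so a multi-agent paradox based on such a symmetric inference chain together with a nonzero end-point probability P(a_1 = v_1, a_N = ¬v_N) > 0 cannot arise in quantum theory. -/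
open Matrix
open scoped ComplexOrder

lemma aux_tr_zero {m k : Type*} [Fintype m] [Fintype k] (M : Matrix m k ℂ)
    (h : (Mᴴ * M).trace = 0) : M = 0 := by
  have h2 : ∑ j : k, ∑ i : m, Complex.normSq (M i j) = 0 := by
    have e : (Mᴴ * M).trace = ((∑ j : k, ∑ i : m, Complex.normSq (M i j) : ℝ) : ℂ) := by
      simp [Matrix.trace, Matrix.diag, Matrix.mul_apply, Matrix.conjTranspose_apply,
        mul_comm, Complex.mul_conj]
    rw [e] at h
    exact_mod_cast h
  ext i j
  have h3 := (Finset.sum_eq_zero_iff_of_nonneg (fun j _ => Finset.sum_nonneg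
    (fun i _ => Complex.normSq_nonneg _))).mp h2 j (Finset.mem_univ j)
  have h4 := (Finset.sum_eq_zero_iff_of_nonneg (fun i _ => Complex.normSq_nonneg _)).mp
    h3 i (Finset.mem_univ i)
  simpa using Complex.normSq_eq_zero.mp h4

open scoped MatrixOrder in
/-- If `A` and `ρ` are PSD and `Tr(Aρ) = 0`, then `Aρ = 0`. -/
lemma aux_mul_eq_zero {n : Type*} [Fintype n] [DecidableEq n]
    {A ρ : Matrix n n ℂ} (hA : A.PosSemidef) (hρ : ρ.PosSemidef)
    (h : (A * ρ).trace = 0) : A * ρ = 0 := by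
  set C := CFC.sqrt A with hC
  set B := CFC.sqrt ρ with hB
  have hCC : C * C = A := CFC.sqrt_mul_sqrt_self A hA.nonneg
  have hBB : B * B = ρ := CFC.sqrt_mul_sqrt_self ρ hρ.nonneg
  have hCH : Cᴴ = C := (CFC.sqrt_nonneg A).posSemidef.isHermitian
  have hBH : Bᴴ = B := (CFC.sqrt_nonneg ρ).posSemidef.isHermitian
  have key : C * B = 0 := by
    apply aux_tr_zero
    have e : (C * B)ᴴ * (C * B) = B * (C * C * B) := by
      rw [conjTranspose_mul, hCH, hBH]; rw [Matrix.mul_assoc, Matrix.mul_assoc]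
    rw [e, Matrix.trace_mul_comm, Matrix.mul_assoc, hCC, hBB]
    exact h
  calc A * ρ = C * (C * B) * B := by rw [← hCC, ← hBB]; noncomm_ring
    _ = 0 := by rw [key]; simp

/-- Chain step: for commuting projections with matched probabilities, `Pρ = Qρ`. -/
lemma aux_step {n : Type*} [Fintype n] [DecidableEq n]
    {P Q ρ : Matrix n n ℂ} (hρ : ρ.PosSemidef)
    (hPH : Pᴴ = P) (hPP : P * P = P) (hQH : Qᴴ = Q) (hQQ : Q * Q = Q)
    (hc : P * Q = Q * P)
    (h1 : (P * Q * ρ).trace = (P * ρ).trace)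
    (h2 : (P * ρ).trace = (Q * ρ).trace) :
    P * ρ = Q * ρ := by
  have psd : ∀ A : Matrix n n ℂ, Aᴴ = A → A * A = A → A.PosSemidef := by
    intro A hH hAA
    have : A = Aᴴ * A := by rw [hH, hAA]
    rw [this]
    exact posSemidef_conjTranspose_mul_self A
  -- first projection: P(1-Q)
  have hAH : (P * (1 - Q))ᴴ = P * (1 - Q) := by
    rw [conjTranspose_mul, conjTranspose_sub, conjTranspose_one, hPH, hQH]
    rw [Matrix.sub_mul, Matrix.mul_sub, Matrix.one_mul, Matrix.mul_one, hc]
  have hq1 : (1 - Q) * (1 - Q) = 1 - Q := by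
    rw [Matrix.sub_mul, Matrix.one_mul, Matrix.mul_sub, Matrix.mul_one, hQQ, sub_self, sub_zero]
  have hAA : (P * (1 - Q)) * (P * (1 - Q)) = P * (1 - Q) := by
    have hcomm1 : (1 - Q) * P = P * (1 - Q) := by
      rw [Matrix.sub_mul, Matrix.mul_sub, Matrix.one_mul, Matrix.mul_one, hc]
    calc P * (1 - Q) * (P * (1 - Q)) = P * ((1 - Q) * P * (1 - Q)) := by noncomm_ring
      _ = P * (P * ((1 - Q) * (1 - Q))) := by rw [hcomm1, Matrix.mul_assoc]
      _ = P * (1 - Q) := by rw [hq1, ← Matrix.mul_assoc, hPP]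
  have htrA : ((P * (1 - Q)) * ρ).trace = 0 := by
    have : (P * (1 - Q)) * ρ = P * ρ - P * Q * ρ := by
      rw [Matrix.mul_sub, Matrix.mul_one, Matrix.sub_mul]
    rw [this, trace_sub, h1, sub_self]
  have hz1 : (P * (1 - Q)) * ρ = 0 := aux_mul_eq_zero (psd _ hAH hAA) hρ htrA
  have e1 : P * ρ = P * Q * ρ := by
    have : P * ρ - P * Q * ρ = 0 := by
      rw [← hz1, Matrix.mul_sub, Matrix.mul_one, Matrix.sub_mul]
    linear_combination (norm := noncomm_ring) this
  -- second projection: (1-P)Q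
  have hBH : ((1 - P) * Q)ᴴ = (1 - P) * Q := by
    rw [conjTranspose_mul, conjTranspose_sub, conjTranspose_one, hPH, hQH]
    rw [Matrix.sub_mul, Matrix.mul_sub, Matrix.one_mul, Matrix.mul_one, hc]
  have hp1 : (1 - P) * (1 - P) = 1 - P := by
    rw [Matrix.sub_mul, Matrix.one_mul, Matrix.mul_sub, Matrix.mul_one, hPP, sub_self, sub_zero]
  have hBB : ((1 - P) * Q) * ((1 - P) * Q) = (1 - P) * Q := by
    have hcomm2 : Q * (1 - P) = (1 - P) * Q := by
      rw [Matrix.sub_mul, Matrix.mul_sub, Matrix.one_mul, Matrix.mul_one, hc]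
    calc (1 - P) * Q * ((1 - P) * Q) = (1 - P) * (Q * (1 - P) * Q) := by noncomm_ring
      _ = (1 - P) * ((1 - P) * (Q * Q)) := by rw [hcomm2, Matrix.mul_assoc]
      _ = (1 - P) * Q := by rw [hQQ, ← Matrix.mul_assoc, hp1]
  have htrB : (((1 - P) * Q) * ρ).trace = 0 := by
    have : ((1 - P) * Q) * ρ = Q * ρ - P * Q * ρ := by
      rw [Matrix.sub_mul, Matrix.one_mul, Matrix.sub_mul]
    rw [this, trace_sub, h1, h2, sub_self]
  have hz2 : ((1 - P) * Q) * ρ = 0 := aux_mul_eq_zero (psd _ hBH hBB) hρ htrB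
  have e2 : Q * ρ = P * Q * ρ := by
    have : Q * ρ - P * Q * ρ = 0 := by
      rw [← hz2, Matrix.sub_mul, Matrix.one_mul, Matrix.sub_mul]
    linear_combination (norm := noncomm_ring) this
  rw [e1, e2]

/-- **No symmetric quantum paradoxes** (Corollary 22). The projections are indexed
`0, …, N-1`.  Under the hypotheses of symmetric chain reduction, the end-point
probability `P(a_1 = v_1, a_N = ¬v_N) = Tr(π_0 (1 - π_{N-1}) ρ)` vanishes, so a
multi-agent paradox based on such a symmetric inference chain cannot arise in
quantum theory. -/
theorem no_symmetric_quantum_paradoxes {n : Type*} [Fintype n] [DecidableEq n] [Nonempty n]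
    (N : ℕ) (hN : 2 ≤ N) (π : ℕ → Matrix n n ℂ) (ρ : Matrix n n ℂ)
    (hρ : ρ.PosSemidef)
    (hproj : ∀ i, i < N → (π i)ᴴ = π i ∧ π i * π i = π i)
    (hcomm : ∀ i, i + 1 < N → π i * π (i + 1) = π (i + 1) * π i)
    (hcomm' : π (N - 1) * π 0 = π 0 * π (N - 1))
    (htr : ∀ i, i + 1 < N →
      (π i * π (i + 1) * ρ).trace = (π i * ρ).trace ∧
      (π i * ρ).trace = (π (i + 1) * ρ).trace) :
    (π 0 * (1 - π (N - 1)) * ρ).trace = 0 := by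
  have chain : ∀ i, i < N → π 0 * ρ = π i * ρ := by
    intro i
    induction i with
    | zero => intro _; rfl
    | succ k ih =>
      intro hk
      have hkN : k < N := Nat.lt_of_succ_lt hk
      have hPk := hproj k hkN
      have hPk1 := hproj (k + 1) hk
      have hstep := aux_step hρ hPk.1 hPk.2 hPk1.1 hPk1.2 (hcomm k hk)
        (htr k hk).1 (htr k hk).2
      rw [ih hkN, hstep]
  have hNm : N - 1 < N := Nat.sub_lt (by omega) one_pos
  have h0 := hproj 0 (by omega)
  have key : π 0 * ρ = π (N - 1) * ρ := chain (N - 1) hNm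
  have : π 0 * (1 - π (N - 1)) * ρ = 0 := by
    have : π 0 * (1 - π (N - 1)) * ρ = π 0 * ρ - π 0 * (π (N - 1) * ρ) := by
      rw [Matrix.mul_sub, Matrix.mul_one, Matrix.sub_mul, Matrix.mul_assoc]
    rw [this, ← key, ← Matrix.mul_assoc, h0.2, sub_self]
  rw [this, trace_zero]
end

section
/- Triple reduction step in the symmetric chain argument (key intermediate claim in the proof of Theorem 21): Let n be a nonempty finite type, let ρ ∈ Matrix n n ℂ be positive semidefinite, and let π_1, π_2, π_3 ∈ Matrix n n ℂ be orthogonal projections with π_2 * π_3 = π_3 * π_2 (no commutation assumed between π_1 and π_2 or between π_1 and π_3). If Tr(π_1 * π_2 * ρ) = Tr(π_1 * ρ) = Tr(π_2 * ρ) and Tr(π_2 * π_3 * ρ) = Tr(π_2 * ρ) = Tr(π_3 * ρ), then Tr(π_1 * π_3 * ρ) = Tr(π_1 * ρ) = Tr(π_3 * ρ). -/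
open Matrix
open scoped ComplexOrder

/-- A matrix whose Gram matrix has zero trace is zero. -/
private lemma eq_zero_of_trace_ct_mul_self {n : Type*} [Fintype n] {B : Matrix n n ℂ}
    (h : (Bᴴ * B).trace = 0) : B = 0 := by
  have hdiag : ∀ j, (Bᴴ * B) j j = dotProduct (star fun k => B k j) (fun k => B k j) := by
    intro j
    simp [Matrix.mul_apply, Matrix.conjTranspose_apply, dotProduct]
  have hz : ∀ j ∈ Finset.univ, (Bᴴ * B) j j = 0 := by
    refine (Finset.sum_eq_zero_iff_of_nonneg ?_).mp h
    intro j _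
    rw [hdiag j]
    exact dotProduct_star_self_nonneg _
  ext i j
  have := (dotProduct_star_self_eq_zero).mp
    ((hdiag j).symm.trans (hz j (Finset.mem_univ j)))
  simpa using congrFun this i

/-- Key step: if `Tr(PQρ) = Tr(Pρ) = Tr(Qρ)` with `ρ = A * A`, `A` Hermitian, and
`P`, `Q` Hermitian idempotents, then `P * A = Q * A`. -/
private lemma proj_mul_eq {n : Type*} [Fintype n] (A P Q : Matrix n n ℂ)
    (hA : Aᴴ = A) (hPh : Pᴴ = P) (hPp : P * P = P) (hQh : Qᴴ = Q) (hQp : Q * Q = Q)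
    (h1 : (P * Q * (A * A)).trace = (P * (A * A)).trace)
    (h2 : (P * (A * A)).trace = (Q * (A * A)).trace) :
    P * A = Q * A := by
  set B := (P - Q) * A with hB
  have hct : Bᴴ = A * (P - Q) := by
    simp [hB, conjTranspose_mul, conjTranspose_sub, hA, hPh, hQh]
  -- trace of Bᴴ * B
  have htr : (Bᴴ * B).trace =
      (P * (A * A)).trace - (P * Q * (A * A)).trace
        - (Q * P * (A * A)).trace + (Q * (A * A)).trace := by
    have : Bᴴ * B = A * ((P - Q) * (P - Q)) * A := by
      rw [hct, hB]; noncomm_ring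
    rw [this]
    have hcyc : ∀ M : Matrix n n ℂ, (A * M * A).trace = (M * (A * A)).trace := by
      intro M
      rw [Matrix.trace_mul_comm, ← Matrix.mul_assoc, Matrix.trace_mul_comm]
    rw [hcyc]
    have hexp : (P - Q) * (P - Q) = P - P * Q - Q * P + Q := by
      rw [sub_mul, mul_sub, mul_sub, hPp, hQp]; abel
    rw [hexp]
    simp [Matrix.add_mul, Matrix.sub_mul, Matrix.trace_add, Matrix.trace_sub]
  -- Tr(Pρ) is real
  have hPreal : star ((P * (A * A)).trace) = (P * (A * A)).trace := by
    rw [← Matrix.trace_conjTranspose, conjTranspose_mul, conjTranspose_mul, hA, hPh,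
      Matrix.trace_mul_comm]
  -- Tr(QPρ) = star Tr(PQρ)
  have hQP : (Q * P * (A * A)).trace = star ((P * Q * (A * A)).trace) := by
    have key : (Q * P * (A * A))ᴴ.trace = (P * Q * (A * A)).trace := by
      have : (Q * P * (A * A))ᴴ = (A * A) * (P * Q) := by
        simp [conjTranspose_mul, hA, hPh, hQh, Matrix.mul_assoc]
      rw [this, Matrix.trace_mul_comm]
    rw [← key, Matrix.trace_conjTranspose, star_star]
  have hQPval : (Q * P * (A * A)).trace = (P * (A * A)).trace := by
    rw [hQP, h1, hPreal]
  have hzero : (Bᴴ * B).trace = 0 := by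
    rw [htr, h1, hQPval, ← h2]; ring
  have hB0 : B = 0 := eq_zero_of_trace_ct_mul_self hzero
  have := hB0
  rw [hB, Matrix.sub_mul, sub_eq_zero] at this
  exact this

/-- **Triple reduction step** in the symmetric chain argument (key intermediate claim
in the proof of Theorem 21).  Only `π₂` and `π₃` are assumed to commute. -/
theorem symmetric_triple_reduction {n : Type*} [Fintype n] [DecidableEq n] [Nonempty n]
    (ρ : Matrix n n ℂ) (hρ : ρ.PosSemidef)
    (π₁ π₂ π₃ : Matrix n n ℂ)
    (h1h : π₁ᴴ = π₁) (h1p : π₁ * π₁ = π₁)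
    (h2h : π₂ᴴ = π₂) (h2p : π₂ * π₂ = π₂)
    (h3h : π₃ᴴ = π₃) (h3p : π₃ * π₃ = π₃)
    (hcomm : π₂ * π₃ = π₃ * π₂)
    (h12 : (π₁ * π₂ * ρ).trace = (π₁ * ρ).trace ∧ (π₁ * ρ).trace = (π₂ * ρ).trace)
    (h23 : (π₂ * π₃ * ρ).trace = (π₂ * ρ).trace ∧ (π₂ * ρ).trace = (π₃ * ρ).trace) :
    (π₁ * π₃ * ρ).trace = (π₁ * ρ).trace ∧ (π₁ * ρ).trace = (π₃ * ρ).trace := by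
  obtain ⟨A, hAherm, hAA⟩ : ∃ A : Matrix n n ℂ, Aᴴ = A ∧ ρ = A * A := by
    open scoped MatrixOrder in
    exact ⟨CFC.sqrt ρ, (CFC.sqrt_nonneg ρ).posSemidef.1, (CFC.sqrt_mul_sqrt_self ρ hρ.nonneg).symm⟩
  subst hAA
  have e12 : π₁ * A = π₂ * A :=
    proj_mul_eq A π₁ π₂ hAherm h1h h1p h2h h2p h12.1 h12.2
  have e23 : π₂ * A = π₃ * A :=
    proj_mul_eq A π₂ π₃ hAherm h2h h2p h3h h3p h23.1 h23.2
  have e13 : π₁ * A = π₃ * A := e12.trans e23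
  have key : π₁ * π₃ * (A * A) = π₁ * (A * A) := by
    calc π₁ * π₃ * (A * A) = π₁ * (π₃ * A) * A := by
          simp [Matrix.mul_assoc]
      _ = π₁ * (π₁ * A) * A := by rw [← e13]
      _ = (π₁ * π₁) * A * A := by simp [Matrix.mul_assoc]
      _ = π₁ * (A * A) := by rw [h1p, Matrix.mul_assoc]
  exact ⟨by rw [key], h12.2.trans h23.2⟩
end

section
/- Yablo's paradox (infinite case, as proved in Section 2.1): There is no function s : ℕ → Bool such that for every i ∈ ℕ, s i = true if and only if s j = false for all j > i. Equivalently, the infinite Yablo system of statements 'S_i: S_j is false for all j > i' admits no consistent Boolean truth-value assignment. -/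
/-- **Yablo's paradox** (infinite case, Section 2.1). There is no Boolean truth-value
assignment `s : ℕ → Bool` to the infinite Yablo chain of statements
`S_i : "S_j is false for all j > i"`. -/
theorem yablo_paradox :
    ¬ ∃ s : ℕ → Bool, ∀ i : ℕ, (s i = true ↔ ∀ j : ℕ, i < j → s j = false) := by
  rintro ⟨s, h⟩
  -- every statement is false
  have hall : ∀ i, s i = false := by
    intro i
    by_contra hne
    have hi : s i = true := by
      cases hsi : s i with
      | false => exact absurd hsi hne
      | true => rfl
    have hlater := (h i).mp hi
    -- s (i+1) = false, but also all j > i+1 false, so s(i+1) = true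
    have h1 : s (i+1) = true := (h (i+1)).mpr (fun j hj => hlater j (Nat.lt_of_succ_lt hj))
    have h2 : s (i+1) = false := hlater (i+1) (Nat.lt_succ_self i)
    simp [h1] at h2
  -- then s 0 should be true
  have h0 : s 0 = true := (h 0).mpr (fun j _ => hall j)
  simp [hall 0] at h0
end

section
/- Logical contextuality of the Frauchiger–Renner/Hardy empirical model (instance of Theorem 15): There is no probability mass function p on Bool × Bool × Bool × Bool, with coordinates (a, b, u, w) and true encoding the outcomes 1 and 'ok', such that p({a = false and b = true}) = 0, p({a = true and w = true}) = 0, p({u = true and b = false}) = 0, and p({u = true and w = true}) = 1/12. Hence no global joint distribution reproduces the four pairwise Born-rule context distributions of the Frauchiger–Renner setup, whose values include P(a=0,b=1)=0, P(a=1,w=ok)=0, P(u=ok,b=0)=0 and P(u=ok,w=ok)=1/12. -/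
/-- **Logical contextuality of the Frauchiger–Renner / Hardy empirical model**
(instance of Theorem 15).  The coordinates are `(a, b, u, w)`, with `true` encoding
the outcomes `1` and `ok`.  No global joint distribution satisfies
`P(a=0, b=1) = 0`, `P(a=1, w=ok) = 0`, `P(u=ok, b=0) = 0` and `P(u=ok, w=ok) = 1/12`. -/
theorem fr_logically_contextual :
    ¬ ∃ p : PMF (Bool × Bool × Bool × Bool),
        prob p {x | x.1 = false ∧ x.2.1 = true} = 0 ∧
        prob p {x | x.1 = true ∧ x.2.2.2 = true} = 0 ∧
        prob p {x | x.2.2.1 = true ∧ x.2.1 = false} = 0 ∧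
        prob p {x | x.2.2.1 = true ∧ x.2.2.2 = true} = 1 / 12 := by
  rintro ⟨p, h1, h2, h3, h4⟩
  unfold prob at *
  rw [PMF.toOuterMeasure_apply_eq_zero_iff] at h1 h2 h3
  have hne : p.toOuterMeasure {x | x.2.2.1 = true ∧ x.2.2.2 = true} ≠ 0 := by
    rw [h4]; norm_num
  rw [Ne, PMF.toOuterMeasure_apply_eq_zero_iff, Set.not_disjoint_iff] at hne
  obtain ⟨⟨a, b, u, w⟩, hsupp, hu, hw⟩ := hne
  simp only [Set.mem_setOf_eq] at hu hw
  subst hu; subst hw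
  cases b
  · exact (Set.disjoint_left.mp h3 hsupp ⟨rfl, rfl⟩)
  · cases a
    · exact (Set.disjoint_left.mp h1 hsupp ⟨rfl, rfl⟩)
    · exact (Set.disjoint_left.mp h2 hsupp ⟨rfl, rfl⟩)
end

section
/- Logical contextuality of the KCBS empirical model (instance of Theorem 15, Section 4.2): There is no probability mass function p on Bool⁵, with coordinates (a₁, a₂, a₃, a₄, a₅) and true encoding the outcome 1, such that p({a₂ = true and a₁ = true}) = 0, p({a₃ = false and a₂ = false}) = 0, p({a₄ = true and a₃ = true}) = 0, p({a₅ = false and a₄ = false}) = 0, and p({a₅ = false and a₁ = true}) = 1/9. Hence no global joint distribution reproduces the five pairwise Born-rule context probabilities of the KCBS 5-cycle model, whose values include P(a₂=1,a₁=1)=0, P(a₃=0,a₂=0)=0, P(a₄=1,a₃=1)=0, P(a₅=0,a₄=0)=0 and P(a₅=0,a₁=1)=1/9. -/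
lemma prob_zero_of_mem {α : Type*} {p : PMF α} {E : Set α} (h : prob p E = 0)
    {x : α} (hx : x ∈ E) : p x = 0 := by
  rw [prob, PMF.toOuterMeasure_apply_eq_zero_iff] at h
  by_contra hne
  exact Set.disjoint_left.mp h (by simpa [PMF.mem_support_iff] using hne) hx

/-- **Logical contextuality of the KCBS empirical model** (instance of Theorem 15,
Section 4.2).  The coordinates are `(a₁, a₂, a₃, a₄, a₅)`, with `true` encoding the
outcome `1`.  No global joint distribution satisfies `P(a₂=1, a₁=1) = 0`,
`P(a₃=0, a₂=0) = 0`, `P(a₄=1, a₃=1) = 0`, `P(a₅=0, a₄=0) = 0` and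
`P(a₅=0, a₁=1) = 1/9`. -/
theorem kcbs_logically_contextual :
    ¬ ∃ p : PMF (Bool × Bool × Bool × Bool × Bool),
        prob p {x | x.2.1 = true ∧ x.1 = true} = 0 ∧
        prob p {x | x.2.2.1 = false ∧ x.2.1 = false} = 0 ∧
        prob p {x | x.2.2.2.1 = true ∧ x.2.2.1 = true} = 0 ∧
        prob p {x | x.2.2.2.2 = false ∧ x.2.2.2.1 = false} = 0 ∧
        prob p {x | x.2.2.2.2 = false ∧ x.1 = true} = 1 / 9 := by
  rintro ⟨p, h1, h2, h3, h4, h5⟩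
  have hzero : prob p {x : Bool × Bool × Bool × Bool × Bool |
      x.2.2.2.2 = false ∧ x.1 = true} = 0 := by
    rw [prob, PMF.toOuterMeasure_apply_eq_zero_iff, Set.disjoint_left]
    rintro ⟨a1, a2, a3, a4, a5⟩ hx ⟨h5f, h1t⟩
    rw [PMF.mem_support_iff] at hx
    apply hx
    rcases Bool.eq_false_or_eq_true a2 with h | h
    · exact prob_zero_of_mem h1 ⟨h, h1t⟩
    · rcases Bool.eq_false_or_eq_true a3 with h' | h'
      · rcases Bool.eq_false_or_eq_true a4 with h'' | h''
        · exact prob_zero_of_mem h3 ⟨h'', h'⟩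
        · exact prob_zero_of_mem h4 ⟨h5f, h''⟩
      · exact prob_zero_of_mem h2 ⟨h', h⟩
  rw [h5] at hzero
  simp at hzero
end
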